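/- arXiv:1901.08313 — 3 statements merged into one kernel-verified Lean document; each statement's English description precedes it below -/
import Mathlib

section
/- For all x, y > 0, one has x^α y^{λ-α} + x^{λ-α} y^α ≤ √(xy) (x^{λ-1} + y^{λ-1}), where λ ∈ (1,2] and α ∈ [max{1/2, λ-1}, λ/2]. -/
theorem stmt_2 (lam alpha : ℝ) (hlam1 : 1 < lam) (hlam2 : lam ≤ 2)
    (halpha1 : max (1/2) (lam - 1) ≤ alpha) (halpha2 : alpha ≤ lam / 2)
    (x y : ℝ) (hx : 0 < x) (hy : 0 < y) :
    x ^ alpha * y ^ (lam - alpha) + x ^ (lam - alpha) * y ^ alpha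
      ≤ Real.sqrt (x * y) * (x ^ (lam - 1) + y ^ (lam - 1)) := by
  have ha : (1:ℝ)/2 ≤ alpha := le_trans (le_max_left _ _) halpha1
  set a := alpha - 1/2 with ha'
  set b := lam - alpha - 1/2 with hb'
  have ha0 : 0 ≤ a := by simp [ha']; linarith
  have hb0 : 0 ≤ b := by simp [hb']; linarith
  have key : x ^ a * y ^ b + x ^ b * y ^ a ≤ x ^ (a + b) + y ^ (a + b) := by
    have h : 0 ≤ (x ^ a - y ^ a) * (x ^ b - y ^ b) := by
      rcases le_total x y with h | h
      · nlinarith [Real.rpow_le_rpow hx.le h ha0, Real.rpow_le_rpow hx.le h hb0]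
      · nlinarith [Real.rpow_le_rpow hy.le h ha0, Real.rpow_le_rpow hy.le h hb0]
    rw [Real.rpow_add hx, Real.rpow_add hy]
    nlinarith [h]
  have hsqrt : Real.sqrt (x * y) = x ^ ((1:ℝ)/2) * y ^ ((1:ℝ)/2) := by
    rw [Real.sqrt_eq_rpow, Real.mul_rpow hx.le hy.le]
  have e1 : x ^ alpha = x ^ ((1:ℝ)/2) * x ^ a := by
    rw [← Real.rpow_add hx, ha']; ring_nf
  have e2 : y ^ (lam - alpha) = y ^ ((1:ℝ)/2) * y ^ b := by
    rw [← Real.rpow_add hy, hb']; ring_nf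
  have e3 : x ^ (lam - alpha) = x ^ ((1:ℝ)/2) * x ^ b := by
    rw [← Real.rpow_add hx, hb']; ring_nf
  have e4 : y ^ alpha = y ^ ((1:ℝ)/2) * y ^ a := by
    rw [← Real.rpow_add hy, ha']; ring_nf
  have e5 : x ^ (lam - 1) = x ^ (a + b) := by rw [ha', hb']; ring_nf
  have e6 : y ^ (lam - 1) = y ^ (a + b) := by rw [ha', hb']; ring_nf
  rw [hsqrt, e1, e2, e3, e4, e5, e6]
  have hp : 0 < x ^ ((1:ℝ)/2) * y ^ ((1:ℝ)/2) :=
    mul_pos (Real.rpow_pos_of_pos hx _) (Real.rpow_pos_of_pos hy _)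
  calc x ^ ((1:ℝ)/2) * x ^ a * (y ^ ((1:ℝ)/2) * y ^ b)
        + x ^ ((1:ℝ)/2) * x ^ b * (y ^ ((1:ℝ)/2) * y ^ a)
      = x ^ ((1:ℝ)/2) * y ^ ((1:ℝ)/2) * (x ^ a * y ^ b + x ^ b * y ^ a) := by ring
    _ ≤ x ^ ((1:ℝ)/2) * y ^ ((1:ℝ)/2) * (x ^ (a+b) + y ^ (a+b)) := by
        exact mul_le_mul_of_nonneg_left key hp.le
end

section
/- For all x, y > 0, one has (x+y)·ln(x+y) ≤ x·ln x + y·ln y + 2·ln 2·√(xy). -/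
open Real Set

private lemma aux_g_deriv : deriv (fun v : ℝ => Real.exp (v * Real.log 2) - 1 - v ^ 2)
    = fun v : ℝ => Real.log 2 * Real.exp (v * Real.log 2) - 2 * v := by
  funext v
  have h : HasDerivAt (fun v : ℝ => Real.exp (v * Real.log 2) - 1 - v ^ 2)
      (Real.log 2 * Real.exp (v * Real.log 2) - 2 * v) v := by
    have h1 : HasDerivAt (fun v : ℝ => v * Real.log 2) (Real.log 2) v := by
      simpa using (hasDerivAt_id v).mul_const (Real.log 2)
    have h2 := (Real.hasDerivAt_exp (v * Real.log 2)).comp v h1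
    have h3 : HasDerivAt (fun v : ℝ => v ^ 2) (2 * v) v := by
      simpa using hasDerivAt_pow 2 v
    exact ((h2.sub_const 1).sub h3).congr_deriv (by ring)
  exact h.deriv

private lemma aux_key (v : ℝ) (h0 : 0 ≤ v) (h1 : v ≤ 1) :
    1 + v ^ 2 ≤ Real.exp (v * Real.log 2) := by
  set g : ℝ → ℝ := fun v => Real.exp (v * Real.log 2) - 1 - v ^ 2 with hg
  have hdiff : Differentiable ℝ g := by
    have : Differentiable ℝ (fun v : ℝ => Real.exp (v * Real.log 2)) :=
      (Real.differentiable_exp.comp ((differentiable_id).mul_const _))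
    exact (this.sub_const 1).sub (differentiable_pow 2)
  have hdiff2 : Differentiable ℝ (deriv g) := by
    rw [hg, aux_g_deriv]
    have : Differentiable ℝ (fun v : ℝ => Real.exp (v * Real.log 2)) :=
      (Real.differentiable_exp.comp ((differentiable_id).mul_const _))
    exact (this.const_mul _).sub ((differentiable_id).const_mul 2)
  have hconc : ConcaveOn ℝ (Icc (0:ℝ) 1) g := by
    apply concaveOn_of_deriv2_nonpos' (convex_Icc 0 1) hdiff.differentiableOn
      hdiff2.differentiableOn
    intro x hx
    have hd2 : deriv (deriv g) x
        = Real.log 2 * (Real.log 2 * Real.exp (x * Real.log 2)) - 2 := by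
      rw [hg, aux_g_deriv]
      have h1 : HasDerivAt (fun v : ℝ => v * Real.log 2) (Real.log 2) x := by
        simpa using (hasDerivAt_id x).mul_const (Real.log 2)
      have h2 := (Real.hasDerivAt_exp (x * Real.log 2)).comp x h1
      have h3 : HasDerivAt (fun v : ℝ => 2 * v) 2 x := by
        simpa using (hasDerivAt_id x).const_mul (2:ℝ)
      have := ((h2.const_mul (Real.log 2)).sub h3)
      exact (this.congr_deriv (by ring)).deriv
    show deriv^[2] g x ≤ 0
    rw [Function.iterate_succ, Function.iterate_one, Function.comp_apply, hd2]
    have hlogpos : 0 < Real.log 2 := Real.log_pos (by norm_num)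
    have hexp : Real.exp (x * Real.log 2) ≤ 2 := by
      have hle : x * Real.log 2 ≤ Real.log 2 := by nlinarith [hx.2]
      calc Real.exp (x * Real.log 2) ≤ Real.exp (Real.log 2) := Real.exp_le_exp.2 hle
        _ = 2 := Real.exp_log (by norm_num)
    have hlog : Real.log 2 < 1 := by
      have := Real.log_two_lt_d9; linarith
    have hsq : Real.log 2 * Real.log 2 < 1 := by nlinarith
    nlinarith [Real.exp_pos (x * Real.log 2)]
  have h01 : (0:ℝ) ∈ Icc (0:ℝ) 1 := by norm_num
  have h11 : (1:ℝ) ∈ Icc (0:ℝ) 1 := by norm_num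
  have := hconc.2 h01 h11 (by linarith : (0:ℝ) ≤ 1 - v) h0 (by ring)
  have hg0 : g 0 = 0 := by simp [hg]
  have hg1 : g 1 = 0 := by simp [hg, Real.exp_log]; norm_num
  have hv : g v ≥ 0 := by
    have heq : (1 - v) • (0:ℝ) + v • (1:ℝ) = v := by simp
    rw [heq, hg0, hg1] at this
    simpa using this
  simp only [hg] at hv
  linarith

private lemma aux_star (u : ℝ) (h0 : 0 < u) (h1 : u ≤ 1) :
    Real.log (1 + u) ≤ Real.log 2 * Real.sqrt u := by
  set v := Real.sqrt u with hv
  have hv0 : 0 ≤ v := Real.sqrt_nonneg u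
  have hv1 : v ≤ 1 := by
    rw [hv, show (1:ℝ) = Real.sqrt 1 by simp]
    exact Real.sqrt_le_sqrt h1
  have hvsq : v ^ 2 = u := Real.sq_sqrt h0.le
  have := aux_key v hv0 hv1
  rw [hvsq] at this
  calc Real.log (1 + u) ≤ Real.log (Real.exp (v * Real.log 2)) :=
        Real.log_le_log (by linarith) this
    _ = Real.log 2 * v := by rw [Real.log_exp]; ring

private noncomputable def phi (t : ℝ) : ℝ :=
  2 * Real.log 2 * Real.sqrt t + t * Real.log t - (1 + t) * Real.log (1 + t)

private lemma phi_hasDerivAt {t : ℝ} (ht : 0 < t) :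
    HasDerivAt phi (Real.log 2 / Real.sqrt t + Real.log t - Real.log (1 + t)) t := by
  have hs : HasDerivAt Real.sqrt (1 / (2 * Real.sqrt t)) t := Real.hasDerivAt_sqrt ht.ne'
  have h1 : HasDerivAt (fun t : ℝ => 2 * Real.log 2 * Real.sqrt t)
      (2 * Real.log 2 * (1 / (2 * Real.sqrt t))) t := hs.const_mul _
  have h2 : HasDerivAt (fun t : ℝ => t * Real.log t) (Real.log t + 1) t := by
    have := (hasDerivAt_id t).mul (Real.hasDerivAt_log ht.ne')
    have ht' : t * t⁻¹ = 1 := mul_inv_cancel₀ ht.ne'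
    exact this.congr_deriv (by simp only [id_eq]; linear_combination ht')
  have h3 : HasDerivAt (fun t : ℝ => (1 + t) * Real.log (1 + t))
      (Real.log (1 + t) + 1) t := by
    have hu : HasDerivAt (fun t : ℝ => 1 + t) 1 t := by
      simpa using (hasDerivAt_id t).const_add (1:ℝ)
    have hl : HasDerivAt Real.log (1 + t)⁻¹ (1 + t) :=
      Real.hasDerivAt_log (by linarith)
    have := hu.mul (hl.comp t hu)
    have h1t : (1 + t) * (1 + t)⁻¹ = 1 := mul_inv_cancel₀ (by linarith)
    exact this.congr_deriv (by simp only [Function.comp_apply]; linear_combination h1t)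
  have := (h1.add h2).sub h3
  have hsne : Real.sqrt t ≠ 0 := (Real.sqrt_pos.2 ht).ne'
  have heq : 2 * Real.log 2 * (1 / (2 * Real.sqrt t)) + (Real.log t + 1)
      - (Real.log (1 + t) + 1)
      = Real.log 2 / Real.sqrt t + Real.log t - Real.log (1 + t) := by
    field_simp
    ring
  rw [heq] at this
  exact this

private lemma phi_nonneg {t : ℝ} (ht : 1 ≤ t) : 0 ≤ phi t := by
  have ht0 : (0:ℝ) < t := lt_of_lt_of_le one_pos ht
  have hmono : MonotoneOn phi (Ici (1:ℝ)) := by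
    apply monotoneOn_of_deriv_nonneg (convex_Ici 1)
    · intro x hx
      have hx0 : (0:ℝ) < x := lt_of_lt_of_le one_pos hx
      exact (phi_hasDerivAt hx0).continuousAt.continuousWithinAt
    · intro x hx
      rw [interior_Ici] at hx
      exact ((phi_hasDerivAt (lt_trans one_pos hx)).differentiableAt).differentiableWithinAt
    · intro x hx
      rw [interior_Ici] at hx
      have hx0 : (0:ℝ) < x := lt_trans one_pos hx
      rw [(phi_hasDerivAt hx0).deriv]
      have hx1 : (1:ℝ) < x := hx
      have hinv0 : 0 < 1 / x := by positivity
      have hinv1 : 1 / x ≤ 1 := by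
        rw [div_le_one hx0]; linarith
      have hstar := aux_star (1 / x) hinv0 hinv1
      have hlog : Real.log (1 + x) - Real.log x = Real.log (1 + 1 / x) := by
        rw [← Real.log_div (by linarith) hx0.ne']
        congr 1
        field_simp
        ring
      have hsqrt : Real.sqrt (1 / x) = 1 / Real.sqrt x := by
        rw [one_div, Real.sqrt_inv, ← one_div]
      rw [hsqrt] at hstar
      have hsx : 0 < Real.sqrt x := Real.sqrt_pos.2 hx0
      have : Real.log (1 + x) - Real.log x ≤ Real.log 2 / Real.sqrt x := by
        rw [hlog]
        calc Real.log (1 + 1/x) ≤ Real.log 2 * (1 / Real.sqrt x) := hstar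
          _ = Real.log 2 / Real.sqrt x := by ring
      linarith
  have h1 : phi 1 = 0 := by
    simp only [phi, Real.sqrt_one, Real.log_one]
    norm_num
  have := hmono (self_mem_Ici) (mem_Ici.2 ht) ht
  rw [h1] at this
  exact this

theorem stmt_3 (x y : ℝ) (hx : 0 < x) (hy : 0 < y) :
    (x + y) * Real.log (x + y)
      ≤ x * Real.log x + y * Real.log y + 2 * Real.log 2 * Real.sqrt (x * y) := by
  wlog hxy : x ≤ y generalizing x y
  · have := this y x hy hx (le_of_not_ge hxy)
    calc (x + y) * Real.log (x + y) = (y + x) * Real.log (y + x) := by rw [add_comm]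
      _ ≤ y * Real.log y + x * Real.log x + 2 * Real.log 2 * Real.sqrt (y * x) := this
      _ = x * Real.log x + y * Real.log y + 2 * Real.log 2 * Real.sqrt (x * y) := by
          rw [mul_comm y x]; ring
  set t := y / x with htdef
  have ht : 1 ≤ t := (one_le_div hx).2 hxy
  have ht0 : (0:ℝ) < t := lt_of_lt_of_le one_pos ht
  have hphi := phi_nonneg ht
  have hxphi : 0 ≤ x * phi t := mul_nonneg hx.le hphi
  have hsqrt : x * Real.sqrt t = Real.sqrt (x * y) := by
    rw [htdef, show x * y = x ^ 2 * (y / x) by field_simp, Real.sqrt_mul (by positivity),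
      Real.sqrt_sq hx.le]
  have hlogt : Real.log t = Real.log y - Real.log x := Real.log_div hy.ne' hx.ne'
  have hlog1t : Real.log (1 + t) = Real.log (x + y) - Real.log x := by
    rw [htdef, show 1 + y / x = (x + y) / x by field_simp, Real.log_div (by linarith) hx.ne']
  have hexp : x * phi t = x * Real.log x + y * Real.log y
      + 2 * Real.log 2 * Real.sqrt (x * y) - (x + y) * Real.log (x + y) := by
    simp only [phi]
    rw [hlogt, hlog1t]
    have h1 : x * (2 * Real.log 2 * Real.sqrt t) = 2 * Real.log 2 * Real.sqrt (x * y) := by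
      rw [← hsqrt]; ring
    have hyx : x * t = y := by rw [htdef]; field_simp
    calc x * (2 * Real.log 2 * Real.sqrt t + t * (Real.log y - Real.log x)
          - (1 + t) * (Real.log (x + y) - Real.log x))
        = x * (2 * Real.log 2 * Real.sqrt t) + (x * t) * (Real.log y - Real.log x)
          - (x + x * t) * (Real.log (x + y) - Real.log x) := by ring
      _ = 2 * Real.log 2 * Real.sqrt (x * y) + y * (Real.log y - Real.log x)
          - (x + y) * (Real.log (x + y) - Real.log x) := by rw [h1, hyx]
      _ = x * Real.log x + y * Real.log y
          + 2 * Real.log 2 * Real.sqrt (x * y) - (x + y) * Real.log (x + y) := by ring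
  rw [hexp] at hxphi
  linarith
end

section
/- Define J₁(r) := ln(1+r) − ln(2)·√r for r > 0. Then J₁(1) = 0, and there exists r₀ > 1 such that J₁ < 0 on (0,1) ∪ (r₀,∞) and J₁ > 0 on (1,r₀). -/
noncomputable def F : ℝ → ℝ := fun s => Real.log (1 + s^2) - Real.log 2 * s

lemma F_hasDeriv (s : ℝ) : HasDerivAt F (2*s/(1+s^2) - Real.log 2) s := by
  have h1 : HasDerivAt (fun s : ℝ => 1 + s^2) (2*s) s := by
    simpa using ((hasDerivAt_pow 2 s).const_add 1)
  have hne : (1 : ℝ) + s^2 ≠ 0 := by positivity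
  have h2 := (h1.log hne).sub ((hasDerivAt_id s).const_mul (Real.log 2))
  simp at h2
  exact h2

lemma F_deriv : deriv F = fun s => 2*s/(1+s^2) - Real.log 2 :=
  funext fun s => (F_hasDeriv s).deriv

lemma F_deriv2 (s : ℝ) :
    deriv (deriv F) s = (2*(1+s^2) - (2*s)*(2*s))/(1+s^2)^2 := by
  rw [F_deriv]
  have hne : (1 : ℝ) + s^2 ≠ 0 := by positivity
  have h1 : HasDerivAt (fun s : ℝ => 2*s) 2 s := by
    simpa using (hasDerivAt_id s).const_mul (2:ℝ)
  have h2 : HasDerivAt (fun s : ℝ => 1 + s^2) (2*s) s := by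
    simpa using ((hasDerivAt_pow 2 s).const_add 1)
  have h3 := (h1.div h2 hne).sub_const (Real.log 2)
  exact h3.deriv

lemma F_cont : Continuous F := by
  unfold F
  exact ((continuous_const.add (continuous_pow 2)).log
    (fun x : ℝ => (by positivity : (1:ℝ) + x^2 ≠ 0))).sub (continuous_const.mul continuous_id)

lemma F_convex : StrictConvexOn ℝ (Set.Icc 0 1) F := by
  apply strictConvexOn_of_deriv2_pos (convex_Icc 0 1) F_cont.continuousOn
  intro x hx
  rw [interior_Icc, Set.mem_Ioo] at hx
  have : deriv^[2] F x = deriv (deriv F) x := by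
    simp [Function.iterate_succ, Function.comp]
  rw [this, F_deriv2]
  have h : (0:ℝ) < 1 + x^2 := by positivity
  have : 2*(1+x^2) - (2*x)*(2*x) = 2 - 2*x^2 := by ring
  rw [this]
  apply div_pos (by nlinarith [hx.1, hx.2]) (by positivity)

lemma F_concave : StrictConcaveOn ℝ (Set.Ici 1) F := by
  apply strictConcaveOn_of_deriv2_neg (convex_Ici 1) F_cont.continuousOn
  intro x hx
  rw [interior_Ici, Set.mem_Ioi] at hx
  have : deriv^[2] F x = deriv (deriv F) x := by
    simp [Function.iterate_succ, Function.comp]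
  rw [this, F_deriv2]
  have : 2*(1+x^2) - (2*x)*(2*x) = 2 - 2*x^2 := by ring
  rw [this]
  apply div_neg_of_neg_of_pos (by nlinarith) (by positivity)

lemma F_zero : F 0 = 0 := by simp [F]
lemma F_one : F 1 = 0 := by norm_num [F]

lemma log4 : Real.log 4 = 2 * Real.log 2 := by
  rw [show (4:ℝ) = 2^2 by norm_num, Real.log_pow]; push_cast; ring

lemma log1024 : Real.log 1024 = 10 * Real.log 2 := by
  rw [show (1024:ℝ) = 2^10 by norm_num, Real.log_pow]; push_cast; ring

lemma F_two_pos : 0 < F 2 := by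
  unfold F
  rw [show ((1:ℝ)+2^2) = 5 by norm_num]
  have h := Real.log_lt_log (by norm_num : (0:ℝ) < 4) (by norm_num : (4:ℝ) < 5)
  linarith [log4]

lemma F_ten_neg : F 10 < 0 := by
  unfold F
  rw [show ((1:ℝ)+10^2) = 101 by norm_num]
  have h := Real.log_lt_log (by norm_num : (0:ℝ) < 101) (by norm_num : (101:ℝ) < 1024)
  linarith [log1024]

lemma F_neg_small {s : ℝ} (h0 : 0 < s) (h1 : s < 1) : F s < 0 := by
  have h := F_convex.2 (Set.mem_Icc.2 ⟨le_refl 0, zero_le_one⟩)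
    (Set.mem_Icc.2 ⟨zero_le_one, le_refl 1⟩) (by norm_num)
    (show (0:ℝ) < 1 - s by linarith) h0 (by ring)
  simpa [F_zero, F_one, smul_eq_mul] using h

lemma F_pos_mid {s₀ s : ℝ} (hs₀ : 2 < s₀) (hF0 : F s₀ = 0) (h1 : 1 < s) (h2 : s < s₀) :
    0 < F s := by
  have hd : (0:ℝ) < s₀ - 1 := by linarith
  have ha : (0:ℝ) < (s₀ - s)/(s₀ - 1) := div_pos (by linarith) hd
  have hb : (0:ℝ) < (s - 1)/(s₀ - 1) := div_pos (by linarith) hd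
  have hab : (s₀ - s)/(s₀ - 1) + (s - 1)/(s₀ - 1) = 1 := by field_simp; ring
  have h := F_concave.2 (Set.mem_Ici.2 (le_refl 1))
    (Set.mem_Ici.2 (by linarith : (1:ℝ) ≤ s₀)) (by linarith : (1:ℝ) ≠ s₀) ha hb hab
  have hcomb : (s₀ - s)/(s₀ - 1) + (s - 1)/(s₀ - 1) * s₀ = s := by
    field_simp; ring
  simp only [smul_eq_mul, mul_one, F_one, hF0, mul_zero, zero_add, add_zero, hcomb] at h
  linarith

lemma F_neg_big {s₀ s : ℝ} (hs₀ : 2 < s₀) (hF0 : F s₀ = 0) (h2 : s₀ < s) :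
    F s < 0 := by
  have hd : (0:ℝ) < s - 1 := by linarith
  have ha : (0:ℝ) < (s - s₀)/(s - 1) := div_pos (by linarith) hd
  have hb : (0:ℝ) < (s₀ - 1)/(s - 1) := div_pos (by linarith) hd
  have hab : (s - s₀)/(s - 1) + (s₀ - 1)/(s - 1) = 1 := by field_simp; ring
  have h := F_concave.2 (Set.mem_Ici.2 (le_refl 1))
    (Set.mem_Ici.2 (by linarith : (1:ℝ) ≤ s)) (by linarith : (1:ℝ) ≠ s) ha hb hab
  have hcomb : (s - s₀)/(s - 1) + (s₀ - 1)/(s - 1) * s = s₀ := by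
    field_simp; ring
  simp only [smul_eq_mul, mul_one, F_one, hF0, mul_zero, zero_add, hcomb] at h
  nlinarith

theorem stmt_13 :
    (Real.log (1 + 1) - Real.log 2 * Real.sqrt 1 = 0) ∧
    ∃ r₀ : ℝ, 1 < r₀ ∧
      (∀ r : ℝ, 0 < r → r < 1 → Real.log (1 + r) - Real.log 2 * Real.sqrt r < 0) ∧
      (∀ r : ℝ, r₀ < r → Real.log (1 + r) - Real.log 2 * Real.sqrt r < 0) ∧
      (∀ r : ℝ, 1 < r → r < r₀ → 0 < Real.log (1 + r) - Real.log 2 * Real.sqrt r) := by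
  obtain ⟨s₀, hmem, hF0⟩ := intermediate_value_Icc' (by norm_num : (2:ℝ) ≤ 10)
    F_cont.continuousOn (Set.mem_Icc.2 ⟨F_ten_neg.le, F_two_pos.le⟩)
  have hs₀2 : 2 < s₀ := lt_of_le_of_ne hmem.1 (fun h => by rw [← h] at hF0; linarith [F_two_pos])
  have hs₀0 : (0:ℝ) ≤ s₀ := by linarith
  have key : ∀ r : ℝ, 0 ≤ r → Real.log (1 + r) - Real.log 2 * Real.sqrt r = F (Real.sqrt r) := by
    intro r hr
    simp [F, Real.sq_sqrt hr]
  refine ⟨by norm_num, s₀^2, by nlinarith, ?_, ?_, ?_⟩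
  · intro r h0 h1
    rw [key r h0.le]
    exact F_neg_small (Real.sqrt_pos.2 h0)
      (by simpa using Real.sqrt_lt_sqrt h0.le h1)
  · intro r hr
    have h0 : (0:ℝ) ≤ r := by nlinarith
    rw [key r h0]
    refine F_neg_big hs₀2 hF0 ?_
    calc s₀ = Real.sqrt (s₀^2) := (Real.sqrt_sq hs₀0).symm
    _ < Real.sqrt r := Real.sqrt_lt_sqrt (by positivity) hr
  · intro r h1 h2
    rw [key r (by linarith)]
    refine F_pos_mid hs₀2 hF0 (by simpa using Real.sqrt_lt_sqrt zero_le_one h1) ?_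
    calc Real.sqrt r < Real.sqrt (s₀^2) := Real.sqrt_lt_sqrt (by linarith) h2
    _ = s₀ := Real.sqrt_sq hs₀0
end
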